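/- Let G be a finite simple graph on a nonempty vertex set V. Then the supremum, over all real vectors J ∈ ℝ^V with Σ_α J_α² = 1 and all H²-feasible matrices M for G, of the quadratic form Σ_{α,β} M_{αβ} J_α J_β, is equal to ϑ(G). That is, the worst case of the graph semi-definite program for H² equals the Lovász theta function of G. -/

import Mathlib

open scoped BigOperators

/-- A theta-feasible matrix for `G`: real symmetric PSD with trace 1 and vanishing on edges. -/
def ThetaFeasible {V : Type*} [Fintype V] (G : SimpleGraph V) (M : Matrix V V ℝ) : Prop :=
  M.IsSymm ∧ M.PosSemidef ∧ M.trace = 1 ∧ ∀ a b, G.Adj a b → M a b = 0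

/-- The Lovász theta function of `G`. -/
noncomputable def lovaszTheta {V : Type*} [Fintype V] (G : SimpleGraph V) : ℝ :=
  sSup {x : ℝ | ∃ M : Matrix V V ℝ, ThetaFeasible G M ∧ x = ∑ a, ∑ b, M a b}

/-- An H²-feasible matrix for `G`: real symmetric PSD, unit diagonal, vanishing on edges. -/
def H2Feasible {V : Type*} [Fintype V] (G : SimpleGraph V) (M : Matrix V V ℝ) : Prop :=
  M.IsSymm ∧ M.PosSemidef ∧ (∀ a, M a a = 1) ∧ ∀ a b, G.Adj a b → M a b = 0

/-- The block matrix N = [[1, vᵀ],[v, M]]. -/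
def blockN {V : Type*} [Fintype V] [DecidableEq V] (v : V → ℝ) (M : Matrix V V ℝ) :
    Matrix (Unit ⊕ V) (Unit ⊕ V) ℝ :=
  Matrix.fromBlocks 1 (Matrix.of fun _ b => v b) (Matrix.of fun a _ => v a) M

/-- An H-feasible pair for `G`. -/
def HFeasible {V : Type*} [Fintype V] [DecidableEq V] (G : SimpleGraph V)
    (v : V → ℝ) (M : Matrix V V ℝ) : Prop :=
  H2Feasible G M ∧ (blockN v M).PosSemidef

/-- `G` is vertex-transitive. -/
def VertexTransitive {V : Type*} (G : SimpleGraph V) : Prop :=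
  ∀ u w : V, ∃ g : G ≃g G, g u = w

section AuxLemmas

open Matrix

variable {V : Type*} [Fintype V] [DecidableEq V]

lemma psd_diag_nonneg' {M : Matrix V V ℝ} (hM : M.PosSemidef) (a : V) : 0 ≤ M a a := by
  have := hM.dotProduct_mulVec_nonneg (Pi.single a 1)
  simpa [Matrix.mulVec_single, dotProduct, Pi.single_apply] using this

lemma psd_row_zero' {M : Matrix V V ℝ} (hM : M.PosSemidef) {a : V} (ha : M a a = 0)
    (b : V) : M a b = 0 := by
  have h0 : star (Pi.single a (1:ℝ)) ⬝ᵥ M *ᵥ Pi.single a 1 = 0 := by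
    simpa [Matrix.mulVec_single, dotProduct, Pi.single_apply] using ha
  have hcol := congrFun ((hM.dotProduct_mulVec_zero_iff (Pi.single a 1)).mp h0) b
  have hba : M b a = 0 := by
    simpa [Matrix.mulVec_single] using hcol
  have hsymm : M a b = M b a := by
    have := congrFun (congrFun hM.isHermitian a) b
    simpa [Matrix.conjTranspose_apply] using this.symm
  rw [hsymm, hba]

lemma scaled_entry (d : V → ℝ) (M : Matrix V V ℝ) (a b : V) :
    (Matrix.diagonal d * M * Matrix.diagonal d) a b = d a * M a b * d b := by
  simp [Matrix.mul_apply, Matrix.diagonal]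

lemma scaled_psd {M : Matrix V V ℝ} (hM : M.PosSemidef) (d : V → ℝ) :
    (Matrix.diagonal d * M * Matrix.diagonal d).PosSemidef := by
  have := hM.mul_mul_conjTranspose_same (Matrix.diagonal d)
  simpa [Matrix.diagonal_conjTranspose] using this

lemma scaled_symm {M : Matrix V V ℝ} (hs : M.IsSymm) (d : V → ℝ) :
    (Matrix.diagonal d * M * Matrix.diagonal d).IsSymm := by
  unfold Matrix.IsSymm
  rw [Matrix.transpose_mul, Matrix.transpose_mul, Matrix.diagonal_transpose, hs, mul_assoc]

end AuxLemmas

theorem stmt4 {V : Type*} [Fintype V] [Nonempty V] (G : SimpleGraph V) :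
    sSup {x : ℝ | ∃ (J : V → ℝ) (M : Matrix V V ℝ),
        (∑ a, J a ^ 2) = 1 ∧ H2Feasible G M ∧ x = ∑ a, ∑ b, M a b * J a * J b}
      = lovaszTheta G := by
  classical
  unfold lovaszTheta
  congr 1
  ext x
  simp only [Set.mem_setOf_eq]
  constructor
  · rintro ⟨J, M, hJ, ⟨hsymm, hpsd, hdiag, hedge⟩, rfl⟩
    refine ⟨Matrix.diagonal J * M * Matrix.diagonal J,
      ⟨scaled_symm hsymm J, scaled_psd hpsd J, ?_, ?_⟩, ?_⟩
    · rw [Matrix.trace]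
      calc ∑ a, (Matrix.diagonal J * M * Matrix.diagonal J).diag a
          = ∑ a, J a * M a a * J a := by
            refine Finset.sum_congr rfl fun a _ => ?_
            simp [Matrix.diag, scaled_entry]
        _ = ∑ a, J a ^ 2 := by
            refine Finset.sum_congr rfl fun a _ => ?_
            rw [hdiag a]; ring
        _ = 1 := hJ
    · intro a b hab
      rw [scaled_entry, hedge a b hab]; ring
    · refine Finset.sum_congr rfl fun a _ => Finset.sum_congr rfl fun b _ => ?_
      rw [scaled_entry]; ring
  · rintro ⟨M', ⟨hs, hpsd, htr, hedge⟩, rfl⟩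
    set J : V → ℝ := fun a => Real.sqrt (M' a a) with hJdef
    set d : V → ℝ := fun a => if M' a a = 0 then 0 else (Real.sqrt (M' a a))⁻¹ with hddef
    set E : Matrix V V ℝ := Matrix.diagonal (fun a => if M' a a = 0 then 1 else 0) with hEdef
    set M : Matrix V V ℝ := Matrix.diagonal d * M' * Matrix.diagonal d + E with hMdef
    have hnn : ∀ a, 0 ≤ M' a a := psd_diag_nonneg' hpsd
    have hJsq : ∀ a, J a ^ 2 = M' a a := fun a => Real.sq_sqrt (hnn a)
    have hJd : ∀ a, M' a a ≠ 0 → d a * J a = 1 := by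
      intro a h
      have hpos : 0 < M' a a := lt_of_le_of_ne (hnn a) (Ne.symm h)
      have hJpos : 0 < J a := Real.sqrt_pos.mpr hpos
      simp only [hddef, if_neg h]
      exact inv_mul_cancel₀ hJpos.ne'
    have hentry : ∀ a b, M a b = d a * M' a b * d b +
        (if a = b then (if M' a a = 0 then 1 else 0) else 0) := by
      intro a b
      simp [hMdef, hEdef, Matrix.add_apply, scaled_entry, Matrix.diagonal_apply]
    have hsum : ∑ a, M' a a = 1 := by
      simpa [Matrix.trace, Matrix.diag] using htr
    refine ⟨J, M, ?_, ⟨?_, ?_, ?_, ?_⟩, ?_⟩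
    · calc ∑ a, J a ^ 2 = ∑ a, M' a a := Finset.sum_congr rfl fun a _ => hJsq a
        _ = 1 := hsum
    · exact Matrix.IsSymm.add (scaled_symm hs d) (Matrix.isSymm_diagonal _)
    · refine Matrix.PosSemidef.add (scaled_psd hpsd d) (Matrix.PosSemidef.diagonal ?_)
      intro a
      by_cases h : M' a a = 0 <;> simp [h]
    · intro a
      rw [hentry a a, if_pos rfl]
      by_cases h : M' a a = 0
      · simp [hddef, h]
      · rw [if_neg h]
        have := hJd a h
        have h1 : d a * M' a a * d a = (d a * J a) * (d a * J a) := by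
          rw [← hJsq a]; ring
        rw [h1, this]; ring
    · intro a b hab
      rw [hentry a b, hedge a b hab, if_neg (G.ne_of_adj hab)]
      ring
    · refine Finset.sum_congr rfl fun a _ => Finset.sum_congr rfl fun b _ => ?_
      by_cases ha : M' a a = 0
      · have hJa : J a = 0 := by simp [hJdef, ha]
        rw [psd_row_zero' hpsd ha b, hJa]; ring
      · by_cases hb : M' b b = 0
        · have hJb : J b = 0 := by simp [hJdef, hb]
          have hba : M' b a = 0 := psd_row_zero' hpsd hb a
          have : M' a b = M' b a := by
            have := congrFun (congrFun hs b) a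
            simpa [Matrix.transpose_apply] using this
          rw [this, hba, hJb]; ring
        · rw [hentry a b]
          have hd : (if a = b then (if M' a a = 0 then 1 else 0) else 0 : ℝ) = 0 := by
            simp [ha]
          rw [hd, add_zero]
          have h1 := hJd a ha
          have h2 := hJd b hb
          have hkey : d a * M' a b * d b * J a * J b
              = M' a b * (d a * J a) * (d b * J b) := by ring
          rw [hkey, h1, h2]; ring
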